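/- arXiv:2008.07351 — 3 statements merged into one kernel-verified Lean document; each statement's English description precedes it below -/
import Mathlib

section
/- Let m ≥ 1 be a natural number, and κ, μ real constants with μ ≠ 0. Define φ(τ) = ν·e^(μ(1+τ))/(1+τ)^m + ((κ−2)(1+τ))/μ + ((κ − 2 − κμ/(m+1))/μ^(m+2))·Σ_{j=0}^{m} ((m+1)!/j!)·μ^j·(1+τ)^(j−m), where ν = e^(−μ)·((−κ+2)/μ + ((−κ+2+κμ/(m+1))/μ^(m+2))·Σ_{j=0}^{m} ((m+1)!/j!)·μ^j). Then φ(0) = 0 and φ satisfies the ODE φ'(τ) + (m/(1+τ) − μ)·φ(τ) + (κ−2)·τ − 2 = 0 for all τ > −1. -/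
open Finset

lemma sum_key (m : ℕ) (μ s : ℝ) (hs : s ≠ 0) :
    (∑ j ∈ Finset.range (m + 1),
        ((Nat.factorial (m + 1) : ℝ) / (Nat.factorial j : ℝ)) * μ ^ j *
          ((((j : ℤ) - m : ℤ) : ℝ) * s ^ ((j : ℤ) - m - 1)))
      + ((m : ℝ) / s) * (∑ j ∈ Finset.range (m + 1),
          ((Nat.factorial (m + 1) : ℝ) / (Nat.factorial j : ℝ)) * μ ^ j * s ^ ((j : ℤ) - m))
      - μ * (∑ j ∈ Finset.range (m + 1),
          ((Nat.factorial (m + 1) : ℝ) / (Nat.factorial j : ℝ)) * μ ^ j * s ^ ((j : ℤ) - m))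
    = -((m : ℝ) + 1) * μ ^ (m + 1) := by
  set g : ℕ → ℝ := fun j => μ ^ j * j / (Nat.factorial j : ℝ) * s ^ ((j : ℤ) - m - 1) with hg
  have step : (∑ j ∈ Finset.range (m + 1),
        ((Nat.factorial (m + 1) : ℝ) / (Nat.factorial j : ℝ)) * μ ^ j *
          ((((j : ℤ) - m : ℤ) : ℝ) * s ^ ((j : ℤ) - m - 1)))
      + ((m : ℝ) / s) * (∑ j ∈ Finset.range (m + 1),
          ((Nat.factorial (m + 1) : ℝ) / (Nat.factorial j : ℝ)) * μ ^ j * s ^ ((j : ℤ) - m))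
      - μ * (∑ j ∈ Finset.range (m + 1),
          ((Nat.factorial (m + 1) : ℝ) / (Nat.factorial j : ℝ)) * μ ^ j * s ^ ((j : ℤ) - m))
      = ∑ j ∈ Finset.range (m + 1), (Nat.factorial (m + 1) : ℝ) * (g j - g (j + 1)) := by
    rw [Finset.mul_sum, Finset.mul_sum, ← Finset.sum_add_distrib, ← Finset.sum_sub_distrib]
    refine Finset.sum_congr rfl fun j _ => ?_
    have hzj : s ^ ((j : ℤ) - m) = s ^ ((j : ℤ) - m - 1) * s := by
      conv_lhs => rw [show ((j : ℤ) - m) = ((j : ℤ) - m - 1) + 1 by ring]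
      exact zpow_add_one₀ hs _
    have hzj1 : s ^ (((j + 1 : ℕ) : ℤ) - m - 1) = s ^ ((j : ℤ) - m - 1) * s := by
      conv_lhs => rw [show (((j + 1 : ℕ) : ℤ) - m - 1) = ((j : ℤ) - m - 1) + 1 by push_cast; ring]
      exact zpow_add_one₀ hs _
    have hfac : (Nat.factorial (j + 1) : ℝ) = (j + 1) * (Nat.factorial j : ℝ) := by
      rw [Nat.factorial_succ]; push_cast; ring
    have h1 : (Nat.factorial j : ℝ) ≠ 0 := Nat.cast_ne_zero.2 (Nat.factorial_ne_zero j)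
    have h2 : ((j : ℝ) + 1) ≠ 0 := by positivity
    simp only [hg]
    rw [hzj1, hzj, hfac]
    push_cast
    field_simp
    ring
  rw [step, ← Finset.mul_sum, Finset.sum_range_sub' g (m + 1)]
  have hg0 : g 0 = 0 := by simp [hg]
  have hgm : g (m + 1) = μ ^ (m + 1) * ((m : ℝ) + 1) / (Nat.factorial (m + 1) : ℝ) := by
    have : (((m + 1 : ℕ) : ℤ) - m - 1) = 0 := by push_cast; ring
    simp [hg, this]
  have h1 : (Nat.factorial (m + 1) : ℝ) ≠ 0 := Nat.cast_ne_zero.2 (Nat.factorial_ne_zero _)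
  rw [hg0, hgm]
  field_simp
  ring

/-- Explicit solution (KRS8)–(KRS9) of the soliton ODE: `φ(0) = 0` and
`φ' + (m/(1+τ) − μ)·φ + (κ−2)·τ − 2 = 0`. -/
theorem stmt_8 (m : ℕ) (hm : 1 ≤ m) (κ μ : ℝ) (hμ : μ ≠ 0) (ν : ℝ)
    (hν : ν = Real.exp (-μ) *
      ((-κ + 2) / μ + ((-κ + 2 + κ * μ / (m + 1)) / μ ^ (m + 2)) *
        ∑ j ∈ Finset.range (m + 1),
          ((Nat.factorial (m + 1) : ℝ) / (Nat.factorial j : ℝ)) * μ ^ j))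
    (φ : ℝ → ℝ)
    (hφ : ∀ τ : ℝ, φ τ =
      ν * Real.exp (μ * (1 + τ)) / (1 + τ) ^ m
        + (κ - 2) * (1 + τ) / μ
        + ((κ - 2 - κ * μ / (m + 1)) / μ ^ (m + 2)) *
            ∑ j ∈ Finset.range (m + 1),
              ((Nat.factorial (m + 1) : ℝ) / (Nat.factorial j : ℝ)) * μ ^ j *
                (1 + τ) ^ ((j : ℤ) - (m : ℤ))) :
    φ 0 = 0 ∧
      ∀ τ : ℝ, -1 < τ →
        deriv φ τ + ((m : ℝ) / (1 + τ) - μ) * φ τ + (κ - 2) * τ - 2 = 0 := by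
  have hμm2 : μ ^ (m + 2) ≠ 0 := pow_ne_zero _ hμ
  have hm1 : ((m : ℝ) + 1) ≠ 0 := by positivity
  constructor
  · rw [hφ 0, hν]
    simp only [add_zero, mul_one, one_pow, one_zpow, div_one]
    rw [Real.exp_neg]
    field_simp
    ring
  · intro τ hτ
    have hs : (0 : ℝ) < 1 + τ := by linarith
    have hsne : (1 + τ) ≠ 0 := hs.ne'
    have hφ' : φ = fun t : ℝ =>
        ν * Real.exp (μ * (1 + t)) * (1 + t) ^ (-(m : ℤ))
          + (κ - 2) * (1 + t) / μ
          + ((κ - 2 - κ * μ / (m + 1)) / μ ^ (m + 2)) *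
              ∑ j ∈ Finset.range (m + 1),
                ((Nat.factorial (m + 1) : ℝ) / (Nat.factorial j : ℝ)) * μ ^ j *
                  (1 + t) ^ ((j : ℤ) - (m : ℤ)) := by
      funext t
      rw [hφ t, zpow_neg, zpow_natCast, div_eq_mul_inv]
    rw [hφ']
    have h1 : HasDerivAt (fun t : ℝ => 1 + t) 1 τ := by
      simpa using (hasDerivAt_id τ).const_add (1 : ℝ)
    have hE : HasDerivAt (fun t : ℝ => Real.exp (μ * (1 + t)))
        (Real.exp (μ * (1 + τ)) * μ) τ := by
      simpa using (h1.const_mul μ).exp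
    have hz : ∀ n : ℤ, HasDerivAt (fun t : ℝ => (1 + t) ^ n)
        ((n : ℝ) * (1 + τ) ^ (n - 1)) τ := fun n => by
      simpa [Function.comp_def] using
        (hasDerivAt_zpow n (1 + τ) (Or.inl hsne)).comp τ h1
    have hd : HasDerivAt (fun t : ℝ =>
        ν * Real.exp (μ * (1 + t)) * (1 + t) ^ (-(m : ℤ))
          + (κ - 2) * (1 + t) / μ
          + ((κ - 2 - κ * μ / (m + 1)) / μ ^ (m + 2)) *
              ∑ j ∈ Finset.range (m + 1),
                ((Nat.factorial (m + 1) : ℝ) / (Nat.factorial j : ℝ)) * μ ^ j *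
                  (1 + t) ^ ((j : ℤ) - (m : ℤ)))
        ((ν * (Real.exp (μ * (1 + τ)) * μ) * (1 + τ) ^ (-(m : ℤ))
            + ν * Real.exp (μ * (1 + τ)) * ((Int.cast (-(m : ℤ)) : ℝ) * (1 + τ) ^ (-(m : ℤ) - 1)))
          + (κ - 2) * 1 / μ
          + ((κ - 2 - κ * μ / (m + 1)) / μ ^ (m + 2)) *
              ∑ j ∈ Finset.range (m + 1),
                ((Nat.factorial (m + 1) : ℝ) / (Nat.factorial j : ℝ)) * μ ^ j *
                  ((((j : ℤ) - m : ℤ) : ℝ) * (1 + τ) ^ ((j : ℤ) - m - 1))) τ := by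
      exact (((hE.const_mul ν).mul (hz (-(m : ℤ)))).add
        ((h1.const_mul (κ - 2)).div_const μ)).add
        ((HasDerivAt.fun_sum (fun (j : ℕ) _ => (hz ((j : ℤ) - m)).const_mul
          (((Nat.factorial (m + 1) : ℝ) / (Nat.factorial j : ℝ)) * μ ^ j))).const_mul _)
    rw [hd.deriv]
    beta_reduce
    have key := sum_key m μ (1 + τ) hsne
    set P := ∑ j ∈ Finset.range (m + 1),
        ((Nat.factorial (m + 1) : ℝ) / (Nat.factorial j : ℝ)) * μ ^ j *
          ((((j : ℤ) - m : ℤ) : ℝ) * (1 + τ) ^ ((j : ℤ) - m - 1)) with hPdef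
    set Q := ∑ j ∈ Finset.range (m + 1),
        ((Nat.factorial (m + 1) : ℝ) / (Nat.factorial j : ℝ)) * μ ^ j *
          (1 + τ) ^ ((j : ℤ) - (m : ℤ)) with hQdef
    have hP : P = μ * Q - ((m : ℝ) / (1 + τ)) * Q - ((m : ℝ) + 1) * μ ^ (m + 1) := by
      linarith [key]
    have e1 : (1 + τ) ^ (-(m : ℤ)) = (1 + τ) ^ (-(m : ℤ) - 1) * (1 + τ) := by
      conv_lhs => rw [show (-(m : ℤ)) = (-(m : ℤ) - 1) + 1 by ring]
      exact zpow_add_one₀ hsne _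
    have hμm1 : μ ^ (m + 1) ≠ 0 := pow_ne_zero _ hμ
    rw [hP, e1, show μ ^ (m + 2) = μ ^ (m + 1) * μ from pow_succ μ (m + 1)]
    push_cast
    field_simp
    ring
end

section
/- Let m ≥ 1 and let κ > 2 be a real constant. Define ν(κ,μ) = e^(−μ)·((−κ+2)/μ + ((−κ+2+κμ/(m+1))/μ^(m+2))·Σ_{j=0}^{m} ((m+1)!/j!)·μ^j) for μ > 0. Then there exists μ > 0 with ν(κ,μ) = 0. -/
open Finset

/-- Claim 4.4: existence of `μ > 0` with `ν(κ,μ) = 0` when `κ > 2`. -/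
theorem stmt_10 (m : ℕ) (hm : 1 ≤ m) (κ : ℝ) (hκ : 2 < κ)
    (ν : ℝ → ℝ)
    (hν : ∀ μ : ℝ, 0 < μ → ν μ = Real.exp (-μ) *
      ((-κ + 2) / μ + ((-κ + 2 + κ * μ / (m + 1)) / μ ^ (m + 2)) *
        ∑ j ∈ Finset.range (m + 1),
          ((Nat.factorial (m + 1) : ℝ) / (Nat.factorial j : ℝ)) * μ ^ j)) :
    ∃ μ : ℝ, 0 < μ ∧ ν μ = 0 := by
  set S : ℝ → ℝ := fun μ => ∑ j ∈ Finset.range (m + 1),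
      ((Nat.factorial (m + 1) : ℝ) / (Nat.factorial j : ℝ)) * μ ^ j with hSdef
  set g : ℝ → ℝ := fun μ => Real.exp (-μ) *
      ((-κ + 2) / μ + ((-κ + 2 + κ * μ / (m + 1)) / μ ^ (m + 2)) * S μ) with hgdef
  have hνg : ∀ μ : ℝ, 0 < μ → ν μ = g μ := hν
  have hκ0 : (0:ℝ) < κ := by linarith
  have hm1 : (1:ℝ) ≤ (m:ℝ) + 1 := by
    have := Nat.cast_nonneg (α := ℝ) m
    linarith
  set a : ℝ := (κ - 2) / (2 * κ) with hadef
  have ha0 : 0 < a := by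
    apply div_pos <;> linarith
  have ha1 : a < 1 := by
    rw [hadef, div_lt_one (by linarith)]
    linarith
  set C : ℝ := (κ - 2) * ((m:ℝ)+1) * (Nat.factorial (m+1) : ℝ) with hCdef
  have hC0 : 0 < C := by
    apply mul_pos
    apply mul_pos
    · linarith
    · positivity
    · positivity
  set b : ℝ := max 1 (C/2 + 1) with hbdef
  have hb1 : (1:ℝ) ≤ b := le_max_left _ _
  have hbC : C/2 + 1 ≤ b := le_max_right _ _
  have hb0 : 0 < b := by linarith
  have hab : a < b := lt_of_lt_of_le ha1 hb1
  -- sum facts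
  have hSpos : ∀ μ : ℝ, 0 < μ → 0 < S μ := by
    intro μ hμ
    apply Finset.sum_pos
    · intro j hj
      apply mul_pos
      · apply div_pos <;> exact_mod_cast Nat.factorial_pos _
      · positivity
    · exact ⟨0, Finset.mem_range.2 (Nat.succ_pos m)⟩
  have hSlow : ((m:ℝ)+1) * b ^ m ≤ S b := by
    have hmem : m ∈ Finset.range (m+1) := Finset.self_mem_range_succ m
    have h1 : ((Nat.factorial (m + 1) : ℝ) / (Nat.factorial m : ℝ)) * b ^ m ≤ S b := by
      apply Finset.single_le_sum (f := fun j => ((Nat.factorial (m + 1) : ℝ) / (Nat.factorial j : ℝ)) * b ^ j) _ hmem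
      intro j hj
      apply mul_nonneg
      · positivity
      · positivity
    have h2 : ((Nat.factorial (m + 1) : ℝ) / (Nat.factorial m : ℝ)) = (m:ℝ) + 1 := by
      rw [Nat.factorial_succ]
      push_cast
      field_simp
    rw [h2] at h1
    exact h1
  have hSup : S b ≤ ((m:ℝ)+1) * (Nat.factorial (m+1) : ℝ) * b ^ m := by
    have : S b ≤ ∑ j ∈ Finset.range (m+1), (Nat.factorial (m+1) : ℝ) * b ^ m := by
      apply Finset.sum_le_sum
      intro j hj
      apply mul_le_mul
      · apply div_le_self
        · positivity
        · exact_mod_cast Nat.one_le_iff_ne_zero.2 (Nat.factorial_ne_zero j)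
      · exact pow_le_pow_right₀ hb1 (Nat.lt_succ_iff.mp (Finset.mem_range.mp hj))
      · positivity
      · positivity
    simpa [Finset.sum_const, Finset.card_range, mul_assoc, mul_comm, mul_left_comm] using this
  -- g a < 0
  have hga : g a < 0 := by
    have hnum : -κ + 2 + κ * a / ((m:ℝ)+1) < 0 := by
      have hκa : κ * a = (κ - 2) / 2 := by
        rw [hadef]; field_simp
      have h1 : κ * a / ((m:ℝ)+1) ≤ (κ - 2) / 2 := by
        rw [hκa]
        apply div_le_self _ hm1
        linarith
      linarith
    have ht2 : (-κ + 2 + κ * a / ((m:ℝ)+1)) / a ^ (m+2) < 0 :=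
      div_neg_of_neg_of_pos hnum (by positivity)
    have ht1 : (-κ + 2) / a < 0 := div_neg_of_neg_of_pos (by linarith) ha0
    have := mul_neg_of_neg_of_pos ht2 (hSpos a ha0)
    have hsum : (-κ + 2) / a + (-κ + 2 + κ * a / ((m:ℝ)+1)) / a ^ (m+2) * S a < 0 := by linarith
    exact mul_neg_of_pos_of_neg (Real.exp_pos _) hsum
  -- g b > 0
  have hgb : 0 < g b := by
    have hbne : b ≠ 0 := ne_of_gt hb0
    have hnum : 0 < (-κ + 2) * b ^ (m+1) + (-κ + 2 + κ * b / ((m:ℝ)+1)) * S b := by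
      have hdist : (-κ + 2 + κ * b / ((m:ℝ)+1)) * S b
          = (-κ + 2) * S b + (κ * b / ((m:ℝ)+1)) * S b := by ring
      have hlow : κ * b * b ^ m ≤ (κ * b / ((m:ℝ)+1)) * S b := by
        have hc : 0 < κ * b / ((m:ℝ)+1) := by positivity
        have := mul_le_mul_of_nonneg_left hSlow (le_of_lt hc)
        calc κ * b * b ^ m = (κ * b / ((m:ℝ)+1)) * (((m:ℝ)+1) * b ^ m) := by
              field_simp
          _ ≤ (κ * b / ((m:ℝ)+1)) * S b := this
      have hup : (-κ + 2) * S b ≥ (-κ + 2) * (((m:ℝ)+1) * (Nat.factorial (m+1) : ℝ) * b ^ m) := by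
        apply mul_le_mul_of_nonpos_left hSup (by linarith)
      have hbm : (0:ℝ) < b ^ m := by positivity
      have hkey : 2 * b - C > 0 := by linarith
      have hbp : b ^ (m+1) = b * b ^ m := by ring
      nlinarith [mul_pos hkey hbm]
    have : 0 < (-κ + 2) / b + (-κ + 2 + κ * b / ((m:ℝ)+1)) / b ^ (m+2) * S b := by
      have heq : (-κ + 2) / b + (-κ + 2 + κ * b / ((m:ℝ)+1)) / b ^ (m+2) * S b
          = ((-κ + 2) * b ^ (m+1) + (-κ + 2 + κ * b / ((m:ℝ)+1)) * S b) / b ^ (m+2) := by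
        field_simp
        ring
      rw [heq]
      exact div_pos hnum (by positivity)
    exact mul_pos (Real.exp_pos _) this
  -- continuity
  have hsub : Set.Icc a b ⊆ Set.Ioi (0:ℝ) := fun x hx => lt_of_lt_of_le ha0 hx.1
  have hcontg : ContinuousOn g (Set.Icc a b) := by
    apply ContinuousOn.mul
    · exact (Real.continuous_exp.comp continuous_neg).continuousOn
    apply ContinuousOn.add
    · exact ContinuousOn.div continuousOn_const continuousOn_id
        (fun x hx => ne_of_gt (lt_of_lt_of_le ha0 hx.1))
    apply ContinuousOn.mul
    · apply ContinuousOn.div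
      · exact ((continuous_const.add ((continuous_const.mul continuous_id).div_const _))).continuousOn
      · exact (continuous_pow _).continuousOn
      · exact fun x hx => pow_ne_zero _ (ne_of_gt (lt_of_lt_of_le ha0 hx.1))
    · exact (continuous_finset_sum _ (fun j _ => continuous_const.mul (continuous_pow j))).continuousOn
  have hcontν : ContinuousOn ν (Set.Icc a b) :=
    hcontg.congr (fun x hx => hνg x (hsub hx))
  have hνa : ν a < 0 := by rw [hνg a ha0]; exact hga
  have hνb : 0 < ν b := by rw [hνg b hb0]; exact hgb
  have h0 : (0:ℝ) ∈ Set.Icc (ν a) (ν b) := ⟨le_of_lt hνa, le_of_lt hνb⟩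
  obtain ⟨μ, hμmem, hμ0⟩ := intermediate_value_Icc (le_of_lt hab) hcontν h0
  exact ⟨μ, lt_of_lt_of_le ha0 hμmem.1, hμ0⟩
end

section
/- Let m ≥ 1, κ > 2 and μ > 0 be real constants with κ − 2 − κμ/(m+1) < 0. Define φ(τ) = ((κ−2)(1+τ))/μ + ((κ − 2 − κμ/(m+1))/μ^(m+2))·Σ_{j=0}^{m} ((m+1)!/j!)·μ^j·(1+τ)^(j−m). If φ(0) = 0 and φ'(0) > 0, then φ(τ) > 0 for all τ > 0. -/
open Finset

/-- Claim 4.5: positivity of the shrinking-soliton profile (KRS11). -/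
theorem stmt_11 (m : ℕ) (hm : 1 ≤ m) (κ μ : ℝ) (hκ : 2 < κ) (hμ : 0 < μ)
    (hcoef : κ - 2 - κ * μ / (m + 1) < 0)
    (φ : ℝ → ℝ)
    (hφ : ∀ τ : ℝ, φ τ =
      (κ - 2) * (1 + τ) / μ
        + ((κ - 2 - κ * μ / (m + 1)) / μ ^ (m + 2)) *
            ∑ j ∈ Finset.range (m + 1),
              ((Nat.factorial (m + 1) : ℝ) / (Nat.factorial j : ℝ)) * μ ^ j *
                (1 + τ) ^ ((j : ℤ) - (m : ℤ)))
    (h0 : φ 0 = 0) (h0' : 0 < deriv φ 0) :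
    ∀ τ : ℝ, 0 < τ → 0 < φ τ := by
  intro τ hτ
  have hC : (κ - 2 - κ * μ / (m + 1)) / μ ^ (m + 2) < 0 :=
    div_neg_of_neg_of_pos hcoef (pow_pos hμ _)
  have hsum : (∑ j ∈ Finset.range (m + 1),
      ((Nat.factorial (m + 1) : ℝ) / (Nat.factorial j : ℝ)) * μ ^ j *
        (1 + τ) ^ ((j : ℤ) - (m : ℤ)))
      ≤ ∑ j ∈ Finset.range (m + 1),
      ((Nat.factorial (m + 1) : ℝ) / (Nat.factorial j : ℝ)) * μ ^ j *
        (1 + (0:ℝ)) ^ ((j : ℤ) - (m : ℤ)) := by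
    apply Finset.sum_le_sum
    intro j hj
    have hj' : j ≤ m := Nat.lt_succ_iff.mp (Finset.mem_range.mp hj)
    have hz : ((j : ℤ) - (m : ℤ)) ≤ 0 := by
      simp only [sub_nonpos]; exact_mod_cast hj'
    have hbase : (1:ℝ) ≤ 1 + τ := by linarith
    have hle : (1 + τ) ^ ((j : ℤ) - (m : ℤ)) ≤ (1:ℝ) := zpow_le_one_of_nonpos₀ hbase hz
    have ha : (0:ℝ) ≤ ((Nat.factorial (m + 1) : ℝ) / (Nat.factorial j : ℝ)) * μ ^ j := by
      positivity
    calc ((Nat.factorial (m + 1) : ℝ) / (Nat.factorial j : ℝ)) * μ ^ j *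
        (1 + τ) ^ ((j : ℤ) - (m : ℤ))
        ≤ ((Nat.factorial (m + 1) : ℝ) / (Nat.factorial j : ℝ)) * μ ^ j * 1 :=
          mul_le_mul_of_nonneg_left hle ha
      _ = ((Nat.factorial (m + 1) : ℝ) / (Nat.factorial j : ℝ)) * μ ^ j *
          (1 + (0:ℝ)) ^ ((j : ℤ) - (m : ℤ)) := by norm_num
  have hlin : (κ - 2) * (1 + (0:ℝ)) / μ < (κ - 2) * (1 + τ) / μ := by
    rw [div_lt_div_iff₀ hμ hμ]
    nlinarith [mul_pos (mul_pos (show (0:ℝ) < κ - 2 by linarith) hτ) hμ]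
  have hmul := mul_le_mul_of_nonpos_left hsum hC.le
  have := hφ τ
  have h0eq := hφ 0
  rw [h0] at h0eq
  linarith
end
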